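/- Let B : [0,∞) → [0,∞) be nondecreasing with B(t+a) ≤ B(t) + a/2 for all t, a ≥ 0 and B(λ_1) > 0. Assume ‖Σ − Σ̂‖_∞ ≤ B(λ_1) and, for all i ≥ 1, |λ_i − λ̂_i| ≤ B(λ_i) and |λ_i − λ̂_i| ≤ B(λ̂_i). Let Σ̃ be the operator with the same eigenvectors q_i as Σ̂ and eigenvalues λ̃_i = max(λ̂_i − B(λ̂_i), 0). Then for every 1/L-Lipschitz function f : ℝ → ℝ, ‖f(Σ) − f(Σ̃)‖_HS ≤ L^{-1} √( 11 Tr(Σ) B(λ_1) + 13 B(λ_1)² ). -/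

import Mathlib

open scoped RealInnerProductSpace

private lemma parseval_sq {H : Type*} [NormedAddCommGroup H] [InnerProductSpace ℝ H]
    (e : HilbertBasis ℕ ℝ H) (w : H) :
    HasSum (fun i => (⟪w, e i⟫ : ℝ) ^ 2) (‖w‖ ^ 2) := by
  have h := e.hasSum_inner_mul_inner w w
  rw [real_inner_self_eq_norm_sq] at h
  have hfe : (fun i => (⟪w, e i⟫ : ℝ) ^ 2) = fun i => ⟪w, e i⟫ * ⟪e i, w⟫ := by
    funext i; rw [sq, real_inner_comm w (e i)]
  rwa [hfe]

private lemma diag_lemma {H : Type*} [NormedAddCommGroup H] [InnerProductSpace ℝ H]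
    (e : HilbertBasis ℕ ℝ H) (g : ℕ → ℝ) (n : ℕ) :
    (∑' i, (g i * ⟪e n, e i⟫) • e i) = g n • e n := by
  rw [tsum_eq_single n]
  · have h1 : (⟪e n, e n⟫ : ℝ) = 1 := by
      rw [real_inner_self_eq_norm_sq, e.orthonormal.1 n]; norm_num
    rw [h1, mul_one]
  · intro i hi
    rw [e.orthonormal.2 (Ne.symm hi), mul_zero, zero_smul]

private lemma coeff_lemma {H : Type*} [NormedAddCommGroup H] [InnerProductSpace ℝ H]
    [CompleteSpace H] (e : HilbertBasis ℕ ℝ H) (g : ℕ → ℝ) (C : ℝ)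
    (hg : ∀ i, |g i| ≤ C) (u : H) (w : H)
    (hw : w = ∑' i, (g i * ⟪u, e i⟫) • e i) (k : ℕ) :
    ⟪w, e k⟫ = g k * ⟪u, e k⟫ := by
  have hsq : Summable fun i => ((g i * ⟪u, e i⟫) : ℝ) ^ 2 := by
    have hb := (parseval_sq e u).summable.mul_left (C ^ 2)
    refine Summable.of_nonneg_of_le (fun i => sq_nonneg _) (fun i => ?_) hb
    have h1 : |g i * ⟪u, e i⟫| ≤ C * |⟪u, e i⟫| := by
      rw [abs_mul]; exact mul_le_mul_of_nonneg_right (hg i) (abs_nonneg _)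
    calc (g i * ⟪u, e i⟫) ^ 2 = |g i * ⟪u, e i⟫| ^ 2 := (sq_abs _).symm
      _ ≤ (C * |⟪u, e i⟫|) ^ 2 := pow_le_pow_left₀ (abs_nonneg _) h1 2
      _ = C ^ 2 * ⟪u, e i⟫ ^ 2 := by rw [mul_pow, sq_abs]
  have hsum : Summable fun i => (g i * ⟪u, e i⟫) • e i := by
    have horth := e.orthonormal.orthogonalFamily
    have h2 := (horth.summable_iff_norm_sq_summable (fun i => g i * ⟪u, e i⟫)).2 ?_
    · simpa [LinearIsometry.toSpanSingleton_apply] using h2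
    · simpa [Real.norm_eq_abs, mul_pow, sq_abs] using hsq
  have hhs : HasSum (fun i => (g i * ⟪u, e i⟫) • e i) w := by
    rw [hw]; exact hsum.hasSum
  have h2 := (innerSL ℝ (e k)).hasSum hhs
  have hip : ∀ x : H, ((innerSL ℝ (e k)) x : ℝ) = ⟪e k, x⟫ := fun x => rfl
  have h3 : HasSum (fun i => ((innerSL ℝ (e k)) ((g i * ⟪u, e i⟫) • e i) : ℝ))
      (g k * ⟪u, e k⟫) := by
    have h0 : ∀ i, i ≠ k → ((innerSL ℝ (e k)) ((g i * ⟪u, e i⟫) • e i) : ℝ) = 0 := by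
      intro i hi
      rw [hip, real_inner_smul_right, e.orthonormal.2 (Ne.symm hi), mul_zero]
    have h4 := hasSum_single (f := fun i => ((innerSL ℝ (e k)) ((g i * ⟪u, e i⟫) • e i) : ℝ)) k h0
    have h5 : ((innerSL ℝ (e k)) ((g k * ⟪u, e k⟫) • e k) : ℝ) = g k * ⟪u, e k⟫ := by
      rw [hip, real_inner_smul_right]
      have h1 : (⟪e k, e k⟫ : ℝ) = 1 := by
        rw [real_inner_self_eq_norm_sq, e.orthonormal.1 k]; norm_num
      rw [h1, mul_one]
    convert h4 using 1
    exact h5.symm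
  have h6 := h2.unique h3
  rw [hip] at h6
  rw [real_inner_comm, h6]

private lemma cs_bound (t : Finset ℕ) (d a : ℕ → ℝ) (M : ℝ) (hM : 0 ≤ M)
    (hd : ∀ n, 0 ≤ d n)
    (h1 : ∑ n ∈ t, d n ^ 2 * a n ^ 2 ≤ M ^ 2) (h2 : ∑ n ∈ t, a n ^ 2 ≤ 1) :
    ∑ n ∈ t, d n * a n ^ 2 ≤ M := by
  have key := Finset.sum_mul_sq_le_sq_mul_sq t (fun n => d n * a n) (fun n => a n)
  simp only [mul_pow, mul_assoc, ← sq] at key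
  have h5 : 0 ≤ ∑ n ∈ t, d n * a n ^ 2 :=
    Finset.sum_nonneg fun n _ => mul_nonneg (hd n) (sq_nonneg _)
  have h6 : 0 ≤ ∑ n ∈ t, a n ^ 2 := Finset.sum_nonneg fun n _ => sq_nonneg _
  have h7 : 0 ≤ ∑ n ∈ t, d n ^ 2 * a n ^ 2 :=
    Finset.sum_nonneg fun n _ => mul_nonneg (sq_nonneg _) (sq_nonneg _)
  nlinarith [key, h1, h2, h5, h6, h7, hM, sq_nonneg M]

/-- Frobenius-norm bound for the smooth spectral cut-off applied to the shrunk estimator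
`Σ̃` (same eigenvectors `q_i` as `Σ̂`, eigenvalues `λ̃_i = max(λ̂_i - B(λ̂_i), 0)`):
assuming `B(λ_1) > 0`: for every `1/L`-Lipschitz `f`,
`‖f(Σ) - f(Σ̃)‖_HS ≤ L⁻¹ √(11 Tr(Σ) B(λ_1) + 13 B(λ_1)²)`.
Here the Hilbert–Schmidt norm of an operator `T` is expressed through the orthonormal
basis `q` as `√(∑' n, ‖T (q n)‖²)` and `λ_1 = lam 0`. -/
theorem robust_pca_smooth_cutoff_hs_worst_case_bound
    {H : Type*} [NormedAddCommGroup H] [InnerProductSpace ℝ H] [CompleteSpace H]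
    (p q : HilbertBasis ℕ ℝ H)
    (lam lamh : ℕ → ℝ)
    (hlam_anti : Antitone lam) (hlam_nonneg : ∀ i, 0 ≤ lam i)
    (hlam_sum : Summable lam)
    (hlamh_anti : Antitone lamh) (hlamh_nonneg : ∀ i, 0 ≤ lamh i)
    (hlamh_sum : Summable lamh)
    (S Sh : H →L[ℝ] H)
    (hS : ∀ u, S u = ∑' i, (lam i * ⟪u, p i⟫) • p i)
    (hSh : ∀ u, Sh u = ∑' i, (lamh i * ⟪u, q i⟫) • q i)
    (B : ℝ → ℝ)
    (hB_nonneg : ∀ t, 0 ≤ t → 0 ≤ B t)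
    (hB_mono : ∀ s t, 0 ≤ s → s ≤ t → B s ≤ B t)
    (hB_half : ∀ t a, 0 ≤ t → 0 ≤ a → B (t + a) ≤ B t + a / 2)
    (hBpos : 0 < B (lam 0))
    (hnorm : ‖S - Sh‖ ≤ B (lam 0))
    (heig : ∀ i : ℕ, |lam i - lamh i| ≤ B (lam i) ∧ |lam i - lamh i| ≤ B (lamh i))
    (St : H →L[ℝ] H)
    (hSt : ∀ u, St u = ∑' i, (max (lamh i - B (lamh i)) 0 * ⟪u, q i⟫) • q i)
    (L : ℝ) (hL : 0 < L)
    (f : ℝ → ℝ) (hf : ∀ s t : ℝ, |f s - f t| ≤ L⁻¹ * |s - t|)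
    (fS fSt : H →L[ℝ] H)
    (hfS : ∀ u, fS u = ∑' i, (f (lam i) * ⟪u, p i⟫) • p i)
    (hfSt : ∀ u, fSt u = ∑' i, (f (max (lamh i - B (lamh i)) 0) * ⟪u, q i⟫) • q i)
    :
    Real.sqrt (∑' n : ℕ, ‖(fS - fSt) (q n)‖ ^ 2) ≤
      L⁻¹ * Real.sqrt (11 * (∑' i : ℕ, lam i) * B (lam 0) + 13 * B (lam 0) ^ 2) := by
  classical
  set B1 := B (lam 0) with hB1def
  set Tr := ∑' i : ℕ, lam i with hTrdef
  set lamt : ℕ → ℝ := fun n => max (lamh n - B (lamh n)) 0 with hltdef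
  have hlam_le : ∀ i, lam i ≤ lam 0 := fun i => hlam_anti (Nat.zero_le i)
  have hlamh_le : ∀ i, lamh i ≤ lamh 0 := fun i => hlamh_anti (Nat.zero_le i)
  have hTr0 : 0 ≤ Tr := tsum_nonneg hlam_nonneg
  have hB10 : 0 ≤ B1 := hBpos.le
  have hlt_nonneg : ∀ n, 0 ≤ lamt n := fun n => le_max_right _ _
  have hlt_le : ∀ n, lamt n ≤ lam n := by
    intro n
    apply max_le _ (hlam_nonneg n)
    have h := abs_le.1 (heig n).2
    linarith [h.1]
  have hlt_lamh : ∀ n, lamt n ≤ lamh n := by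
    intro n
    apply max_le _ (hlamh_nonneg n)
    have := hB_nonneg (lamh n) (hlamh_nonneg n); linarith
  have hBlamh : ∀ n, B (lamh n) ≤ 3/2 * B1 := by
    intro n
    have h0 := abs_le.1 (heig 0).1
    rw [← hB1def] at h0
    have h1 : lamh 0 ≤ lam 0 + B1 := by linarith [h0.1]
    calc B (lamh n) ≤ B (lamh 0) := hB_mono _ _ (hlamh_nonneg n) (hlamh_le n)
      _ ≤ B (lam 0 + B1) := hB_mono _ _ (hlamh_nonneg 0) h1
      _ ≤ B (lam 0) + B1 / 2 := hB_half _ _ (hlam_nonneg 0) hB10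
      _ = 3/2 * B1 := by rw [← hB1def]; ring
  have hr : ∀ n, lamh n - lamt n ≤ 3/2 * B1 := by
    intro n
    have h1 : lamh n - B (lamh n) ≤ lamt n := le_max_left _ _
    linarith [hBlamh n]
  have hr0 : ∀ n, 0 ≤ lamh n - lamt n := fun n => by linarith [hlt_lamh n]
  -- coefficient identities
  have hS_coeff : ∀ u i, (⟪S u, p i⟫ : ℝ) = lam i * ⟪u, p i⟫ := by
    intro u i
    refine coeff_lemma p lam (lam 0) (fun j => ?_) u (S u) (hS u) i
    rw [abs_of_nonneg (hlam_nonneg j)]; exact hlam_le j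
  have hSh_coeff : ∀ u n, (⟪Sh u, q n⟫ : ℝ) = lamh n * ⟪u, q n⟫ := by
    intro u n
    refine coeff_lemma q lamh (lamh 0) (fun j => ?_) u (Sh u) (hSh u) n
    rw [abs_of_nonneg (hlamh_nonneg j)]; exact hlamh_le j
  have hfS_coeff : ∀ u i, (⟪fS u, p i⟫ : ℝ) = f (lam i) * ⟪u, p i⟫ := by
    intro u i
    refine coeff_lemma p (fun j => f (lam j)) (|f 0| + L⁻¹ * lam 0) (fun j => ?_) u (fS u)
      (hfS u) i
    have h1 := hf (lam j) 0
    have h2 : |lam j - 0| = lam j := by rw [sub_zero, abs_of_nonneg (hlam_nonneg j)]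
    rw [h2] at h1
    have h3 : |f (lam j)| ≤ |f (lam j) - f 0| + |f 0| := by
      have := abs_add_le (f (lam j) - f 0) (f 0)
      simpa using this
    have hL0 : (0:ℝ) ≤ L⁻¹ := inv_nonneg.2 hL.le
    have h4 := mul_le_mul_of_nonneg_left (hlam_le j) hL0
    linarith
  -- diagonal identities
  have hSh_diag : ∀ n, Sh (q n) = lamh n • q n := fun n => by
    rw [hSh (q n)]; exact diag_lemma q lamh n
  have hS_diag : ∀ i, S (p i) = lam i • p i := fun i => by
    rw [hS (p i)]; exact diag_lemma p lam i
  have hfSt_diag : ∀ n, fSt (q n) = f (lamt n) • q n := fun n => by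
    rw [hfSt (q n)]; exact diag_lemma q (fun j => f (lamt j)) n
  -- operator norm bound
  have hop : ∀ w : H, ‖w‖ = 1 → ‖(S - Sh) w‖ ≤ B1 := by
    intro w hw
    calc ‖(S - Sh) w‖ ≤ ‖S - Sh‖ * ‖w‖ := (S - Sh).le_opNorm w
      _ = ‖S - Sh‖ := by rw [hw, mul_one]
      _ ≤ B1 := hnorm
  -- Parseval facts
  have hw1 : ∀ n, HasSum (fun i => (f (lam i) - f (lamt n))^2 * ⟪q n, p i⟫^2)
      (‖(fS - fSt) (q n)‖^2) := by
    intro n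
    have hps := parseval_sq p ((fS - fSt) (q n))
    have hco : ∀ i, (⟪(fS - fSt) (q n), p i⟫ : ℝ) = (f (lam i) - f (lamt n)) * ⟪q n, p i⟫ := by
      intro i
      have hx : (fS - fSt) (q n) = fS (q n) - f (lamt n) • q n := by
        rw [ContinuousLinearMap.sub_apply, hfSt_diag n]
      rw [hx, inner_sub_left, hfS_coeff (q n) i, real_inner_smul_left]; ring
    have heq : (fun i => (⟪(fS - fSt) (q n), p i⟫ : ℝ)^2)
        = fun i => (f (lam i) - f (lamt n))^2 * ⟪q n, p i⟫^2 := by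
      funext i; rw [hco i, mul_pow]
    rwa [heq] at hps
  have hw2 : ∀ n, HasSum (fun i => (lam i - lamh n)^2 * ⟪q n, p i⟫^2)
      (‖(S - Sh) (q n)‖^2) := by
    intro n
    have hps := parseval_sq p ((S - Sh) (q n))
    have hco : ∀ i, (⟪(S - Sh) (q n), p i⟫ : ℝ) = (lam i - lamh n) * ⟪q n, p i⟫ := by
      intro i
      have hx : (S - Sh) (q n) = S (q n) - lamh n • q n := by
        rw [ContinuousLinearMap.sub_apply, hSh_diag n]
      rw [hx, inner_sub_left, hS_coeff (q n) i, real_inner_smul_left]; ring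
    have heq : (fun i => (⟪(S - Sh) (q n), p i⟫ : ℝ)^2)
        = fun i => (lam i - lamh n)^2 * ⟪q n, p i⟫^2 := by
      funext i; rw [hco i, mul_pow]
    rwa [heq] at hps
  have hw3 : ∀ i, HasSum (fun n => (lam i - lamh n)^2 * ⟪q n, p i⟫^2)
      (‖(S - Sh) (p i)‖^2) := by
    intro i
    have hps := parseval_sq q ((S - Sh) (p i))
    have hco : ∀ n, (⟪(S - Sh) (p i), q n⟫ : ℝ) = (lam i - lamh n) * ⟪p i, q n⟫ := by
      intro n
      have hx : (S - Sh) (p i) = lam i • p i - Sh (p i) := by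
        rw [ContinuousLinearMap.sub_apply, hS_diag i]
      rw [hx, inner_sub_left, hSh_coeff (p i) n, real_inner_smul_left]; ring
    have heq : (fun n => (⟪(S - Sh) (p i), q n⟫ : ℝ)^2)
        = fun n => (lam i - lamh n)^2 * ⟪q n, p i⟫^2 := by
      funext n; rw [hco n, mul_pow, real_inner_comm (q n) (p i)]
    rwa [heq] at hps
  have hP1 : ∀ n, HasSum (fun i => (⟪q n, p i⟫:ℝ)^2) 1 := by
    intro n
    have h := parseval_sq p (q n)
    rwa [q.orthonormal.1 n, one_pow] at h
  have hP2 : ∀ i, HasSum (fun n => (⟪q n, p i⟫:ℝ)^2) 1 := by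
    intro i
    have h := parseval_sq q (p i)
    rw [p.orthonormal.1 i, one_pow] at h
    have heq : (fun n => (⟪p i, q n⟫:ℝ)^2) = fun n => (⟪q n, p i⟫:ℝ)^2 := by
      funext n; rw [real_inner_comm (q n) (p i)]
    rwa [heq] at h
  have hwB2 : ∀ n, ‖(S - Sh) (q n)‖^2 ≤ B1^2 := fun n =>
    pow_le_pow_left₀ (norm_nonneg _) (hop _ (q.orthonormal.1 n)) 2
  have hwB3 : ∀ i, ‖(S - Sh) (p i)‖^2 ≤ B1^2 := fun i =>
    pow_le_pow_left₀ (norm_nonneg _) (hop _ (p.orthonormal.1 i)) 2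
  -- Cauchy-Schwarz bounds
  have hCS_n : ∀ i (t : Finset ℕ), ∑ n ∈ t, |lam i - lamh n| * ⟪q n, p i⟫^2 ≤ B1 := by
    intro i t
    refine cs_bound t _ (fun n => ⟪q n, p i⟫) B1 hB10 (fun n => abs_nonneg _) ?_ ?_
    · have h1 : ∑ n ∈ t, (lam i - lamh n)^2 * ⟪q n, p i⟫^2 ≤ B1^2 :=
        le_trans (sum_le_hasSum t (fun n _ => mul_nonneg (sq_nonneg _) (sq_nonneg _)) (hw3 i))
          (hwB3 i)
      simpa [sq_abs] using h1
    · exact sum_le_hasSum t (fun n _ => sq_nonneg _) (hP2 i)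
  have hCS_i : ∀ n, (∑' i, |lam i - lamh n| * ⟪q n, p i⟫^2) ≤ B1 := by
    intro n
    refine tsum_le_of_sum_le' hB10 fun t => ?_
    refine cs_bound t _ (fun i => ⟪q n, p i⟫) B1 hB10 (fun i => abs_nonneg _) ?_ ?_
    · have h1 : ∑ i ∈ t, (lam i - lamh n)^2 * ⟪q n, p i⟫^2 ≤ B1^2 :=
        le_trans (sum_le_hasSum t (fun i _ => mul_nonneg (sq_nonneg _) (sq_nonneg _)) (hw2 n))
          (hwB2 n)
      simpa [sq_abs] using h1
    · exact sum_le_hasSum t (fun i _ => sq_nonneg _) (hP1 n)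
  -- summability facts
  have hsum_c : ∀ n, Summable (fun i => (⟪q n, p i⟫:ℝ)^2) := fun n => (hP1 n).summable
  have habsD : ∀ i n, |lam i - lamh n| ≤ lam 0 + lamh n := by
    intro i n
    rw [abs_le]
    constructor
    · linarith [hlam_nonneg i, hlamh_nonneg n, hlam_nonneg 0]
    · linarith [hlam_le i, hlamh_nonneg n]
  have hsum_absc : ∀ n, Summable (fun i => |lam i - lamh n| * ⟪q n, p i⟫^2) := by
    intro n
    refine Summable.of_nonneg_of_le (fun i => mul_nonneg (abs_nonneg _) (sq_nonneg _))
      (fun i => ?_) ((hsum_c n).mul_left (lam 0 + lamh n))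
    exact mul_le_mul_of_nonneg_right (habsD i n) (sq_nonneg _)
  have sA : ∀ n, Summable (fun i => lam i * (|lam i - lamh n| * ⟪q n, p i⟫^2)) := by
    intro n
    refine Summable.of_nonneg_of_le
      (fun i => mul_nonneg (hlam_nonneg i) (mul_nonneg (abs_nonneg _) (sq_nonneg _)))
      (fun i => ?_) ((hsum_absc n).mul_left (lam 0))
    exact mul_le_mul_of_nonneg_right (hlam_le i) (mul_nonneg (abs_nonneg _) (sq_nonneg _))
  have sB : ∀ n, Summable (fun i => lamt n * (|lam i - lamh n| * ⟪q n, p i⟫^2)) :=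
    fun n => (hsum_absc n).mul_left (lamt n)
  have sC0 : ∀ n, Summable (fun i => lam i * (⟪q n, p i⟫:ℝ)^2) := by
    intro n
    refine Summable.of_nonneg_of_le
      (fun i => mul_nonneg (hlam_nonneg i) (sq_nonneg _))
      (fun i => mul_le_mul_of_nonneg_right (hlam_le i) (sq_nonneg _))
      ((hsum_c n).mul_left (lam 0))
  have sC : ∀ n, Summable (fun i => 3/2*B1 * (lam i * ⟪q n, p i⟫^2)) :=
    fun n => (sC0 n).mul_left _
  have sD : ∀ n, Summable (fun i => 3/2*B1 * (lamt n * (⟪q n, p i⟫:ℝ)^2)) :=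
    fun n => (((hsum_c n).mul_left (lamt n)).mul_left _)
  -- pointwise key inequalities
  have hkey2 : ∀ n i, (lam i - lamt n)^2 ≤
      lam i * |lam i - lamh n| + lamt n * |lam i - lamh n| + 3/2*B1 * lam i + 3/2*B1 * lamt n := by
    intro n i
    have h1 : |lam i - lamt n| ≤ lam i + lamt n := by
      rw [abs_le]
      constructor
      · linarith [hlam_nonneg i, hlt_nonneg n]
      · linarith [hlam_nonneg i, hlt_nonneg n]
    have h2 : |lam i - lamt n| ≤ |lam i - lamh n| + 3/2 * B1 := by
      have h3 := abs_sub_le (lam i) (lamh n) (lamt n)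
      have h4 : |lamh n - lamt n| = lamh n - lamt n := abs_of_nonneg (hr0 n)
      linarith [hr n]
    have h0 : (0:ℝ) ≤ |lam i - lamt n| := abs_nonneg _
    calc (lam i - lamt n)^2 = |lam i - lamt n| * |lam i - lamt n| := by
          rw [abs_mul_abs_self, pow_two]
      _ ≤ (lam i + lamt n) * (|lam i - lamh n| + 3/2 * B1) :=
          mul_le_mul h1 h2 h0 (by linarith [hlam_nonneg i, hlt_nonneg n])
      _ = lam i * |lam i - lamh n| + lamt n * |lam i - lamh n|
            + 3/2*B1 * lam i + 3/2*B1 * lamt n := by ring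
  have hkeyf : ∀ n i, (f (lam i) - f (lamt n))^2 ≤ L⁻¹^2 * (lam i - lamt n)^2 := by
    intro n i
    have h1 := hf (lam i) (lamt n)
    calc (f (lam i) - f (lamt n))^2 = |f (lam i) - f (lamt n)|^2 := (sq_abs _).symm
      _ ≤ (L⁻¹ * |lam i - lamt n|)^2 := pow_le_pow_left₀ (abs_nonneg _) h1 2
      _ = L⁻¹^2 * (lam i - lamt n)^2 := by rw [mul_pow, sq_abs]
  -- per-n bound
  have hbound_n : ∀ n, ‖(fS - fSt) (q n)‖^2 ≤ L⁻¹^2 *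
      ((∑' i, lam i * (|lam i - lamh n| * ⟪q n, p i⟫^2))
        + (∑' i, lamt n * (|lam i - lamh n| * ⟪q n, p i⟫^2))
        + (∑' i, 3/2*B1 * (lam i * ⟪q n, p i⟫^2))
        + (∑' i, 3/2*B1 * (lamt n * ⟪q n, p i⟫^2))) := by
    intro n
    have hle : ∀ i, (f (lam i) - f (lamt n))^2 * ⟪q n, p i⟫^2 ≤
        L⁻¹^2 * (lam i * (|lam i - lamh n| * ⟪q n, p i⟫^2)
          + lamt n * (|lam i - lamh n| * ⟪q n, p i⟫^2)
          + 3/2*B1 * (lam i * ⟪q n, p i⟫^2)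
          + 3/2*B1 * (lamt n * ⟪q n, p i⟫^2)) := by
      intro i
      calc (f (lam i) - f (lamt n))^2 * ⟪q n, p i⟫^2
          ≤ (L⁻¹^2 * (lam i - lamt n)^2) * ⟪q n, p i⟫^2 :=
            mul_le_mul_of_nonneg_right (hkeyf n i) (sq_nonneg _)
        _ ≤ (L⁻¹^2 * (lam i * |lam i - lamh n| + lamt n * |lam i - lamh n|
              + 3/2*B1 * lam i + 3/2*B1 * lamt n)) * ⟪q n, p i⟫^2 :=
            mul_le_mul_of_nonneg_right
              (mul_le_mul_of_nonneg_left (hkey2 n i) (sq_nonneg _)) (sq_nonneg _)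
        _ = L⁻¹^2 * (lam i * (|lam i - lamh n| * ⟪q n, p i⟫^2)
              + lamt n * (|lam i - lamh n| * ⟪q n, p i⟫^2)
              + 3/2*B1 * (lam i * ⟪q n, p i⟫^2)
              + 3/2*B1 * (lamt n * ⟪q n, p i⟫^2)) := by ring
    have hsum4 : Summable (fun i => lam i * (|lam i - lamh n| * ⟪q n, p i⟫^2)
          + lamt n * (|lam i - lamh n| * ⟪q n, p i⟫^2)
          + 3/2*B1 * (lam i * ⟪q n, p i⟫^2)
          + 3/2*B1 * (lamt n * ⟪q n, p i⟫^2)) :=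
      (((sA n).add (sB n)).add (sC n)).add (sD n)
    have h5 := Summable.tsum_le_tsum hle (hw1 n).summable (hsum4.mul_left (L⁻¹^2))
    rw [(hw1 n).tsum_eq] at h5
    calc ‖(fS - fSt) (q n)‖^2
        ≤ ∑' i, L⁻¹^2 * (lam i * (|lam i - lamh n| * ⟪q n, p i⟫^2)
          + lamt n * (|lam i - lamh n| * ⟪q n, p i⟫^2)
          + 3/2*B1 * (lam i * ⟪q n, p i⟫^2)
          + 3/2*B1 * (lamt n * ⟪q n, p i⟫^2)) := h5
      _ = L⁻¹^2 * ∑' i, (lam i * (|lam i - lamh n| * ⟪q n, p i⟫^2)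
          + lamt n * (|lam i - lamh n| * ⟪q n, p i⟫^2)
          + 3/2*B1 * (lam i * ⟪q n, p i⟫^2)
          + 3/2*B1 * (lamt n * ⟪q n, p i⟫^2)) := tsum_mul_left
      _ = L⁻¹^2 * ((∑' i, lam i * (|lam i - lamh n| * ⟪q n, p i⟫^2))
          + (∑' i, lamt n * (|lam i - lamh n| * ⟪q n, p i⟫^2))
          + (∑' i, 3/2*B1 * (lam i * ⟪q n, p i⟫^2))
          + (∑' i, 3/2*B1 * (lamt n * ⟪q n, p i⟫^2))) := by
          congr 1
          exact ((((sA n).hasSum.add (sB n).hasSum).add (sC n).hasSum).add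
            (sD n).hasSum).tsum_eq
  -- finite-sum bounds for the four pieces
  have hT1 : ∀ s : Finset ℕ,
      ∑ n ∈ s, (∑' i, lam i * (|lam i - lamh n| * ⟪q n, p i⟫^2)) ≤ Tr * B1 := by
    intro s
    rw [← Summable.tsum_finsetSum (fun n _ => sA n)]
    have hle : ∀ i, (∑ n ∈ s, lam i * (|lam i - lamh n| * ⟪q n, p i⟫^2)) ≤ lam i * B1 := by
      intro i
      rw [← Finset.mul_sum]
      exact mul_le_mul_of_nonneg_left (hCS_n i s) (hlam_nonneg i)
    have hsl : Summable (fun i => ∑ n ∈ s, lam i * (|lam i - lamh n| * ⟪q n, p i⟫^2)) :=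
      Summable.of_nonneg_of_le (fun i => Finset.sum_nonneg fun n _ =>
        mul_nonneg (hlam_nonneg i) (mul_nonneg (abs_nonneg _) (sq_nonneg _))) hle
        (hlam_sum.mul_right B1)
    calc (∑' i, ∑ n ∈ s, lam i * (|lam i - lamh n| * ⟪q n, p i⟫^2))
        ≤ ∑' i, lam i * B1 := Summable.tsum_le_tsum hle hsl (hlam_sum.mul_right B1)
      _ = Tr * B1 := tsum_mul_right
  have hT2 : ∀ s : Finset ℕ,
      ∑ n ∈ s, (∑' i, lamt n * (|lam i - lamh n| * ⟪q n, p i⟫^2)) ≤ Tr * B1 := by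
    intro s
    have hle : ∀ n, (∑' i, lamt n * (|lam i - lamh n| * ⟪q n, p i⟫^2)) ≤ lam n * B1 := by
      intro n
      rw [tsum_mul_left]
      calc lamt n * ∑' i, (|lam i - lamh n| * ⟪q n, p i⟫^2) ≤ lamt n * B1 :=
            mul_le_mul_of_nonneg_left (hCS_i n) (hlt_nonneg n)
        _ ≤ lam n * B1 := mul_le_mul_of_nonneg_right (hlt_le n) hB10
    calc ∑ n ∈ s, (∑' i, lamt n * (|lam i - lamh n| * ⟪q n, p i⟫^2))
        ≤ ∑ n ∈ s, lam n * B1 := Finset.sum_le_sum fun n _ => hle n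
      _ = (∑ n ∈ s, lam n) * B1 := by rw [Finset.sum_mul]
      _ ≤ Tr * B1 := mul_le_mul_of_nonneg_right
          (Summable.sum_le_tsum s (fun n _ => hlam_nonneg n) hlam_sum) hB10
  have hT3 : ∀ s : Finset ℕ,
      ∑ n ∈ s, (∑' i, 3/2*B1 * (lam i * ⟪q n, p i⟫^2)) ≤ 3/2*B1 * Tr := by
    intro s
    have hx : ∀ n, (∑' i, 3/2*B1 * (lam i * ⟪q n, p i⟫^2))
        = 3/2*B1 * ∑' i, lam i * ⟪q n, p i⟫^2 := fun n => tsum_mul_left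
    simp only [hx]
    rw [← Finset.mul_sum]
    refine mul_le_mul_of_nonneg_left ?_ (by linarith [hB10])
    rw [← Summable.tsum_finsetSum (fun n _ => sC0 n)]
    have hle : ∀ i, (∑ n ∈ s, lam i * (⟪q n, p i⟫:ℝ)^2) ≤ lam i := by
      intro i
      rw [← Finset.mul_sum]
      calc lam i * ∑ n ∈ s, (⟪q n, p i⟫:ℝ)^2 ≤ lam i * 1 :=
            mul_le_mul_of_nonneg_left
              (sum_le_hasSum s (fun n _ => sq_nonneg _) (hP2 i)) (hlam_nonneg i)
        _ = lam i := mul_one _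
    have hsl : Summable (fun i => ∑ n ∈ s, lam i * (⟪q n, p i⟫:ℝ)^2) :=
      Summable.of_nonneg_of_le (fun i => Finset.sum_nonneg fun n _ =>
        mul_nonneg (hlam_nonneg i) (sq_nonneg _)) hle hlam_sum
    exact Summable.tsum_le_tsum hle hsl hlam_sum
  have hT4 : ∀ s : Finset ℕ,
      ∑ n ∈ s, (∑' i, 3/2*B1 * (lamt n * (⟪q n, p i⟫:ℝ)^2)) ≤ 3/2*B1 * Tr := by
    intro s
    have hx : ∀ n, (∑' i, 3/2*B1 * (lamt n * (⟪q n, p i⟫:ℝ)^2)) = 3/2*B1 * lamt n := by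
      intro n
      rw [tsum_mul_left, tsum_mul_left, (hP1 n).tsum_eq, mul_one]
    simp only [hx]
    rw [← Finset.mul_sum]
    have h1 : ∑ n ∈ s, lamt n ≤ Tr := by
      calc ∑ n ∈ s, lamt n ≤ ∑ n ∈ s, lam n := Finset.sum_le_sum fun n _ => hlt_le n
        _ ≤ Tr := Summable.sum_le_tsum s (fun n _ => hlam_nonneg n) hlam_sum
    exact mul_le_mul_of_nonneg_left h1 (by linarith [hB10])
  -- main finite-sum bound
  have hmain : ∀ s : Finset ℕ,
      ∑ n ∈ s, ‖(fS - fSt) (q n)‖^2 ≤ L⁻¹^2 * (11 * Tr * B1 + 13 * B1^2) := by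
    intro s
    calc ∑ n ∈ s, ‖(fS - fSt) (q n)‖^2
        ≤ ∑ n ∈ s, L⁻¹^2 * ((∑' i, lam i * (|lam i - lamh n| * ⟪q n, p i⟫^2))
            + (∑' i, lamt n * (|lam i - lamh n| * ⟪q n, p i⟫^2))
            + (∑' i, 3/2*B1 * (lam i * ⟪q n, p i⟫^2))
            + (∑' i, 3/2*B1 * (lamt n * ⟪q n, p i⟫^2))) :=
          Finset.sum_le_sum fun n _ => hbound_n n
      _ = L⁻¹^2 * ((∑ n ∈ s, ∑' i, lam i * (|lam i - lamh n| * ⟪q n, p i⟫^2))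
            + (∑ n ∈ s, ∑' i, lamt n * (|lam i - lamh n| * ⟪q n, p i⟫^2))
            + (∑ n ∈ s, ∑' i, 3/2*B1 * (lam i * ⟪q n, p i⟫^2))
            + (∑ n ∈ s, ∑' i, 3/2*B1 * (lamt n * ⟪q n, p i⟫^2))) := by
          rw [← Finset.mul_sum]
          congr 1
          simp only [Finset.sum_add_distrib]
      _ ≤ L⁻¹^2 * (Tr * B1 + Tr * B1 + 3/2*B1 * Tr + 3/2*B1 * Tr) := by
          refine mul_le_mul_of_nonneg_left ?_ (sq_nonneg _)
          exact add_le_add (add_le_add (add_le_add (hT1 s) (hT2 s)) (hT3 s)) (hT4 s)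
      _ ≤ L⁻¹^2 * (11 * Tr * B1 + 13 * B1^2) := by
          refine mul_le_mul_of_nonneg_left ?_ (sq_nonneg _)
          nlinarith [mul_nonneg hTr0 hB10, sq_nonneg B1]
  have hfinal : (∑' n : ℕ, ‖(fS - fSt) (q n)‖^2) ≤ L⁻¹^2 * (11 * Tr * B1 + 13 * B1^2) := by
    refine tsum_le_of_sum_le' ?_ hmain
    have h1 : (0:ℝ) ≤ 11 * Tr * B1 + 13 * B1^2 := by
      nlinarith [mul_nonneg hTr0 hB10, sq_nonneg B1]
    exact mul_nonneg (sq_nonneg _) h1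
  calc Real.sqrt (∑' n : ℕ, ‖(fS - fSt) (q n)‖^2)
      ≤ Real.sqrt (L⁻¹^2 * (11 * Tr * B1 + 13 * B1^2)) := Real.sqrt_le_sqrt hfinal
    _ = L⁻¹ * Real.sqrt (11 * Tr * B1 + 13 * B1^2) := by
        rw [Real.sqrt_mul (sq_nonneg _), Real.sqrt_sq (inv_nonneg.2 hL.le)]
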